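/- Fix n ≥ 1 and 0 < ε ≤ 1/2. Let K ⊆ I^n = [0,1]^n and call a map f : K → X ε-tame if for every P = (t₁,…,tₙ) ∈ K, every 1 ≤ j ≤ n and α ∈ {0,1} with |tⱼ - α| ≤ ε and πⱼ^α(P) ∈ K (where πⱼ^α replaces the j-th coordinate by α), one has f(P) = f(πⱼ^α(P)). Then: if f and g are both ε-tame maps from a cubical subcomplex K of I^n to a set X, f = g on K if and only if f = g on the ε-chamber K(ε). -/

import Mathlib

/-- The unit cube `Iⁿ = [0,1]ⁿ`. -/
def cube (n : ℕ) : Set (Fin n → ℝ) := {t | ∀ j, t j ∈ Set.Icc (0 : ℝ) 1}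

/-- A face of `Iⁿ`, labelled by `c : Fin n → Option Bool`: coordinate `j` is free if
`c j = none`, and is fixed at `0` (resp. `1`) if `c j = some false` (resp. `some true`). -/
def face {n : ℕ} (c : Fin n → Option Bool) : Set (Fin n → ℝ) :=
  {t | ∀ j, (c j).elim (t j ∈ Set.Icc (0 : ℝ) 1) (fun b => t j = if b then 1 else 0)}

/-- The `ε`-chamber of a face: the free coordinates are restricted to `[ε, 1-ε]`. -/
def faceChamber {n : ℕ} (ε : ℝ) (c : Fin n → Option Bool) : Set (Fin n → ℝ) :=
  {t | ∀ j, (c j).elim (t j ∈ Set.Icc ε (1 - ε)) (fun b => t j = if b then 1 else 0)}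

/-- The cubical subcomplex of `Iⁿ` determined by a set `S` of face labels. -/
def complexOf {n : ℕ} (S : Set (Fin n → Option Bool)) : Set (Fin n → ℝ) :=
  ⋃ c ∈ S, face c

/-- The `ε`-chamber of the subcomplex: the union of the `ε`-chambers of its maximal faces. -/
def chamberOf {n : ℕ} (ε : ℝ) (S : Set (Fin n → Option Bool)) : Set (Fin n → ℝ) :=
  ⋃ c ∈ {c ∈ S | ∀ c' ∈ S, face c ⊆ face c' → face c = face c'}, faceChamber ε c

/-- `f` is `ε`-tame on `K`: `f(P) = f(πⱼ^α(P))` whenever `|tⱼ - α| ≤ ε` and `πⱼ^α(P) ∈ K`. -/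
def IsTameOn {n : ℕ} {X : Type*} (ε : ℝ) (f : (Fin n → ℝ) → X)
    (K : Set (Fin n → ℝ)) : Prop :=
  ∀ t ∈ K, ∀ (j : Fin n) (b : Bool), |t j - (if b then 1 else 0)| ≤ ε →
    Function.update t j (if b then (1 : ℝ) else 0) ∈ K →
    f t = f (Function.update t j (if b then (1 : ℝ) else 0))

lemma mem_face_update {n} {c : Fin n → Option Bool} {t} (ht : t ∈ face c)
    {j} (hj : c j = none) {x : ℝ} (hx : x ∈ Set.Icc (0:ℝ) 1) :
    Function.update t j x ∈ face c := by
  intro k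
  rcases eq_or_ne k j with rfl | hk
  · simp [Function.update_self, hj, hx]
  · simpa [Function.update_of_ne hk] using ht k

lemma face_subset_complexOf {n} {S : Set (Fin n → Option Bool)} {c} (hc : c ∈ S) :
    face c ⊆ complexOf S :=
  Set.subset_biUnion_of_mem hc

/-- One clamping step. -/
lemma clamp_step {n : ℕ} {X : Type*} {ε : ℝ} (hε : 0 < ε) (hε2 : ε ≤ 1 - ε)
    {S : Set (Fin n → Option Bool)} {f : (Fin n → ℝ) → X}
    (hf : IsTameOn ε f (complexOf S)) {c} (hc : c ∈ S) {t} (ht : t ∈ face c)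
    {j} (hj : c j = none) :
    f t = f (Function.update t j (max ε (min (t j) (1 - ε)))) := by
  have hK := face_subset_complexOf hc
  have h0 : t j ∈ Set.Icc (0:ℝ) 1 := by simpa [hj] using ht j
  rcases lt_or_ge (t j) ε with h1 | h1
  · have hcl : max ε (min (t j) (1 - ε)) = ε := by
      rw [min_eq_left (by linarith), max_eq_left h1.le]
    have m0 : Function.update t j (0:ℝ) ∈ face c :=
      mem_face_update ht hj ⟨le_refl 0, by linarith⟩
    have mε : Function.update t j ε ∈ face c :=
      mem_face_update ht hj ⟨hε.le, by linarith⟩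
    have e0 : f t = f (Function.update t j 0) := by
      have := hf t (hK ht) j false (by simp [abs_le]; constructor <;> linarith [h0.1]) (hK m0)
      simpa using this
    have e1 : f (Function.update t j ε) = f (Function.update t j 0) := by
      have := hf _ (hK mε) j false
        (by simp [abs_of_nonneg hε.le])
        (by rw [Function.update_idem]; simpa using hK m0)
      simpa [Function.update_idem] using this
    rw [hcl, e0, e1]
  rcases lt_or_ge (1 - ε) (t j) with h2 | h2
  · have hcl : max ε (min (t j) (1 - ε)) = 1 - ε := by
      rw [min_eq_right h2.le, max_eq_right hε2]
    have m1 : Function.update t j (1:ℝ) ∈ face c :=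
      mem_face_update ht hj ⟨by linarith, le_refl 1⟩
    have mε : Function.update t j (1 - ε) ∈ face c :=
      mem_face_update ht hj ⟨by linarith, by linarith⟩
    have e0 : f t = f (Function.update t j 1) := by
      have := hf t (hK ht) j true (by simp [abs_le]; constructor <;> linarith [h0.2]) (hK m1)
      simpa using this
    have e1 : f (Function.update t j (1 - ε)) = f (Function.update t j 1) := by
      have := hf _ (hK mε) j true
        (by simp; rw [abs_le]; constructor <;> linarith)
        (by rw [Function.update_idem]; simpa using hK m1)
      simpa [Function.update_idem] using this
    rw [hcl, e0, e1]
  · have hcl : max ε (min (t j) (1 - ε)) = t j := by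
      rw [min_eq_left h2, max_eq_right h1]
    rw [hcl, Function.update_eq_self]

/-- Clamp all coordinates in a finite set. -/
lemma clamp_all {n : ℕ} {X : Type*} {ε : ℝ} (hε : 0 < ε) (hε2 : ε ≤ 1 - ε)
    {S : Set (Fin n → Option Bool)} {f : (Fin n → ℝ) → X}
    (hf : IsTameOn ε f (complexOf S)) {c} (hc : c ∈ S) (A : Finset (Fin n)) :
    ∀ t ∈ face c,
      f t = f (fun j => if j ∈ A ∧ c j = none then max ε (min (t j) (1 - ε)) else t j) := by
  induction A using Finset.induction with
  | empty => intro t ht; simp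
  | @insert a A' ha ih =>
    intro t ht
    set p : Fin n → ℝ := fun j => if j ∈ A' ∧ c j = none then max ε (min (t j) (1 - ε)) else t j
      with hp_def
    have hp : p ∈ face c := by
      intro k
      by_cases hk : k ∈ A' ∧ c k = none
      · have : p k = max ε (min (t k) (1 - ε)) := by simp [hp_def, hk]
        simp only [hk.2, Option.elim, this]
        have h0 : t k ∈ Set.Icc (0:ℝ) 1 := by simpa [hk.2] using ht k
        constructor
        · exact le_max_of_le_left hε.le
        · apply max_le (by linarith) ((min_le_right _ _).trans (by linarith))
      · have : p k = t k := by simp [hp_def, hk]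
        rw [this]; exact ht k
    have hpa : p a = t a := by simp [hp_def, ha]
    have step := ih t ht
    by_cases hca : c a = none
    · have heq : (fun j => if j ∈ insert a A' ∧ c j = none then max ε (min (t j) (1 - ε)) else t j)
          = Function.update p a (max ε (min (t a) (1 - ε))) := by
        funext k
        rcases eq_or_ne k a with rfl | hk
        · simp [Function.update_self, hca]
        · simp [Function.update_of_ne hk, hp_def, hk]
      rw [heq, step, ← hpa]
      exact clamp_step hε hε2 hf hc hp hca
    · have heq : (fun j => if j ∈ insert a A' ∧ c j = none then max ε (min (t j) (1 - ε)) else t j)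
          = p := by
        funext k
        rcases eq_or_ne k a with rfl | hk
        · simp [hp_def, hca, ha]
        · simp [hp_def, hk]
      rw [heq]; exact step

/-- Uniqueness criterion for tame maps: two `ε`-tame maps on a cubical subcomplex `K`
coincide on `K` iff they coincide on the `ε`-chamber `K(ε)`. -/
theorem stmt_5 {n : ℕ} {X : Type*} (hn : 1 ≤ n) (ε : ℝ) (hε : 0 < ε) (hε' : ε ≤ 1 / 2)
    (S : Set (Fin n → Option Bool)) (f g : (Fin n → ℝ) → X)
    (hf : IsTameOn ε f (complexOf S)) (hg : IsTameOn ε g (complexOf S)) :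
    Set.EqOn f g (complexOf S) ↔ Set.EqOn f g (chamberOf ε S) := by
  have hε2 : ε ≤ 1 - ε := by linarith
  constructor
  · intro h t ht
    apply h
    obtain ⟨c, hc, htc⟩ := Set.mem_iUnion₂.1 ht
    refine Set.mem_iUnion₂.2 ⟨c, hc.1, fun j => ?_⟩
    have := htc j
    cases hcj : c j with
    | none =>
      rw [hcj] at this
      exact ⟨by linarith [this.1], by linarith [this.2]⟩
    | some b => rw [hcj] at this; exact this
  · intro h t ht
    obtain ⟨c, hcS, htc⟩ := Set.mem_iUnion₂.1 ht
    -- find a maximal face above c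
    have hfin : ({c' ∈ S | face c ⊆ face c'} : Set (Fin n → Option Bool)).Finite :=
      Set.toFinite _
    obtain ⟨m, hm, hmax⟩ := Set.Finite.exists_maximalFor face _ hfin
      ⟨c, hcS, subset_refl _⟩
    have hmS : m ∈ S := hm.1
    have htm : t ∈ face m := hm.2 htc
    have hmmax : ∀ c' ∈ S, face m ⊆ face c' → face m = face c' := by
      intro c' hc' hsub
      exact hsub.antisymm (hmax ⟨hc', hm.2.trans hsub⟩ hsub)
    set q : Fin n → ℝ := fun j =>
      if j ∈ (Finset.univ : Finset (Fin n)) ∧ m j = none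
      then max ε (min (t j) (1 - ε)) else t j with hq_def
    have hq : q ∈ faceChamber ε m := by
      intro k
      cases hmk : m k with
      | none =>
        have hqk : q k = max ε (min (t k) (1 - ε)) := by simp [hq_def, hmk]
        have h0 : t k ∈ Set.Icc (0:ℝ) 1 := by simpa [hmk] using htm k
        simp only [Option.elim, hqk]
        exact ⟨le_max_left _ _, max_le hε2 ((min_le_right _ _))⟩
      | some b =>
        have hqk : q k = t k := by simp [hq_def, hmk]
        rw [hqk]
        simpa [hmk] using htm k
    have hfq := clamp_all hε hε2 hf hmS Finset.univ t htm
    have hgq := clamp_all hε hε2 hg hmS Finset.univ t htm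
    rw [hfq, hgq]
    exact h (Set.mem_iUnion₂.2 ⟨m, ⟨hmS, hmmax⟩, hq⟩)
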